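/- Let N ≥ 3, let g : ℝ → ℝ be continuous with antiderivative G(s) = ∫₀^s g(τ) dτ, and let u : EuclideanSpace ℝ (Fin N) → ℝ be a twice continuously differentiable function with compact support satisfying the equation Δu(x) + g(u(x)) = 0 for every x. Then u satisfies the Pohozaev identity (N − 2) ∫_{ℝ^N} ‖∇u(x)‖² dx = 2N ∫_{ℝ^N} G(u(x)) dx. -/

import Mathlib

open MeasureTheory

/-- The Laplacian of `u` at `x`: the sum of the second directional derivatives of `u`
along the standard orthonormal basis of `EuclideanSpace ℝ (Fin N)`. -/
noncomputable def laplacian {N : ℕ} (u : EuclideanSpace ℝ (Fin N) → ℝ)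
    (x : EuclideanSpace ℝ (Fin N)) : ℝ :=
  ∑ i : Fin N,
    fderiv ℝ (fun y => fderiv ℝ u y (EuclideanSpace.basisFun (Fin N) ℝ i)) x
      (EuclideanSpace.basisFun (Fin N) ℝ i)

private lemma norm_sq_clm {N : ℕ} (L : EuclideanSpace ℝ (Fin N) →L[ℝ] ℝ) :
    ‖L‖ ^ 2 = ∑ i, (L (EuclideanSpace.basisFun (Fin N) ℝ i)) ^ 2 := by
  set y := (InnerProductSpace.toDual ℝ (EuclideanSpace ℝ (Fin N))).symm L with hy
  have h1 : ‖L‖ = ‖y‖ := by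
    rw [hy, LinearIsometryEquiv.norm_map]
  have h2 : ∀ i, L (EuclideanSpace.basisFun (Fin N) ℝ i) = y i := by
    intro i
    have := InnerProductSpace.toDual_symm_apply (𝕜 := ℝ)
      (x := EuclideanSpace.basisFun (Fin N) ℝ i) (y := L)
    rw [← this, ← hy, real_inner_comm]
    simp [EuclideanSpace.basisFun_apply, PiLp.inner_apply, EuclideanSpace.single_apply]
  rw [h1, EuclideanSpace.norm_eq, Real.sq_sqrt (by positivity)]
  simp [sq_abs, ← h2, EuclideanSpace.basisFun_apply]

private lemma ibp {E : Type*} [NormedAddCommGroup E] [NormedSpace ℝ E] [MeasurableSpace E]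
    [BorelSpace E] [FiniteDimensional ℝ E] {μ : Measure E} [μ.IsAddHaarMeasure]
    {f g : E → ℝ} {f' g' : E → E →L[ℝ] ℝ} {v : E}
    (hf : ∀ x, HasFDerivAt f (f' x) x) (hg : ∀ x, HasFDerivAt g (g' x) x)
    (h1 : Integrable (fun x => f' x v * g x) μ) (h2 : Integrable (fun x => f x * g' x v) μ)
    (h3 : Integrable (fun x => f x * g x) μ) :
    ∫ x, f x * g' x v ∂μ = - ∫ x, f' x v * g x ∂μ :=
  integral_bilinear_hasFDerivAt_right_eq_neg_left_of_integrable
    (B := ContinuousLinearMap.mul ℝ ℝ) h1 h2 h3 (fun x _ => hf x) (fun x _ => hg x)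

/-- Pohozaev identity for compactly supported classical solutions of `Δu + g(u) = 0`. -/
theorem pohozaev_identity {N : ℕ} (hN : 3 ≤ N)
    (g : ℝ → ℝ) (hg : Continuous g)
    (G : ℝ → ℝ) (hG : ∀ s : ℝ, G s = ∫ τ in (0:ℝ)..s, g τ)
    (u : EuclideanSpace ℝ (Fin N) → ℝ) (hu : ContDiff ℝ 2 u)
    (hsupp : HasCompactSupport u)
    (heq : ∀ x, laplacian u x + g (u x) = 0) :
    ((N : ℝ) - 2) * ∫ x, ‖fderiv ℝ u x‖ ^ 2 = 2 * (N : ℝ) * ∫ x, G (u x) := by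
  classical
  set e : Fin N → EuclideanSpace ℝ (Fin N) := fun i => EuclideanSpace.basisFun (Fin N) ℝ i
    with he
  set v : Fin N → EuclideanSpace ℝ (Fin N) → ℝ := fun i x => fderiv ℝ u x (e i) with hv
  have hud : Differentiable ℝ u := hu.differentiable (by norm_num)
  have h1 : ContDiff ℝ 1 (fderiv ℝ u) := hu.fderiv_right (by norm_num)
  have hfd : Differentiable ℝ (fderiv ℝ u) := h1.differentiable (by norm_num)
  have hvc : ∀ i, ContDiff ℝ 1 (v i) := fun i =>
    (ContinuousLinearMap.apply ℝ ℝ (e i)).contDiff.comp h1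
  have hvd : ∀ i, Differentiable ℝ (v i) := fun i => (hvc i).differentiable (by norm_num)
  have hvs : ∀ i, HasCompactSupport (v i) := fun i =>
    (hsupp.fderiv (𝕜 := ℝ)).comp_left
      (g := fun L : EuclideanSpace ℝ (Fin N) →L[ℝ] ℝ => L (e i)) rfl
  have hvcont : ∀ i, Continuous (v i) := fun i => (hvc i).continuous
  -- second derivatives
  have hdfun : ∀ i (x : EuclideanSpace ℝ (Fin N)), HasFDerivAt (v i)
      (((ContinuousLinearMap.apply ℝ ℝ) (e i)).comp (fderiv ℝ (fderiv ℝ u) x)) x := fun i x =>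
    ((ContinuousLinearMap.apply ℝ ℝ (e i)).hasFDerivAt (x := fderiv ℝ u x)).comp x
      (hfd x).hasFDerivAt
  have hdval : ∀ i j (x : EuclideanSpace ℝ (Fin N)),
      fderiv ℝ (v i) x (e j) = fderiv ℝ (fderiv ℝ u) x (e j) (e i) := by
    intro i j x
    rw [(hdfun i x).fderiv]; rfl
  have hsym : ∀ i j (x : EuclideanSpace ℝ (Fin N)),
      fderiv ℝ (v i) x (e j) = fderiv ℝ (v j) x (e i) := by
    intro i j x
    have hs := second_derivative_symmetric (f := u) (f' := fderiv ℝ u)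
      (f'' := fderiv ℝ (fderiv ℝ u) x) (fun y => (hud y).hasFDerivAt) (hfd x).hasFDerivAt
    rw [hdval, hdval, hs]
  have hdcont : ∀ i j, Continuous (fun x => fderiv ℝ (v i) x (e j)) := fun i j =>
    (ContinuousLinearMap.apply ℝ ℝ (e j)).continuous.comp ((hvc i).continuous_fderiv (by norm_num))
  have hds : ∀ i j, HasCompactSupport (fun x => fderiv ℝ (v i) x (e j)) := fun i j =>
    ((hvs i).fderiv (𝕜 := ℝ)).comp_left
      (g := fun L : EuclideanSpace ℝ (Fin N) →L[ℝ] ℝ => L (e j)) rfl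
  -- the equation
  have hlap : ∀ x, (∑ j, fderiv ℝ (v j) x (e j)) = - g (u x) := by
    intro x
    have h := heq x
    have key : laplacian u x = ∑ j, fderiv ℝ (v j) x (e j) := rfl
    rw [key] at h
    linarith
  -- FTC and chain rule
  have hGd : ∀ s, HasDerivAt G (g s) s := fun s =>
    ((hg.integral_hasStrictDerivAt 0 s).hasDerivAt).congr_of_eventuallyEq
      (by filter_upwards with t using hG t)
  have hGcont : Continuous G := continuous_iff_continuousAt.2 fun s => (hGd s).continuousAt
  have hG0 : G 0 = 0 := by rw [hG]; simp
  have hw : ∀ x, HasFDerivAt (fun y => G (u y)) (g (u x) • fderiv ℝ u x) x := fun x =>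
    (hGd (u x)).comp_hasFDerivAt x (hud x).hasFDerivAt
  have hws : HasCompactSupport (fun y => G (u y)) := hsupp.comp_left (g := G) hG0
  have hwcont : Continuous (fun y => G (u y)) := hGcont.comp hu.continuous
  -- coordinates
  have hccont : ∀ i, Continuous (fun x : EuclideanSpace ℝ (Fin N) => x i) := fun i =>
    (EuclideanSpace.proj (𝕜 := ℝ) i).continuous
  have hcder : ∀ i (x : EuclideanSpace ℝ (Fin N)),
      HasFDerivAt (fun x : EuclideanSpace ℝ (Fin N) => x i)
        (EuclideanSpace.proj (𝕜 := ℝ) i) x := fun i x =>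
    (EuclideanSpace.proj (𝕜 := ℝ) i).hasFDerivAt
  have hproj : ∀ i j, (EuclideanSpace.proj (𝕜 := ℝ) i) (e j) = if i = j then (1:ℝ) else 0 := by
    intro i j
    simp [he, EuclideanSpace.basisFun_apply, EuclideanSpace.single_apply]
  have hprojii : ∀ i, (EuclideanSpace.proj (𝕜 := ℝ) i) (e i) = 1 := by
    intro i; rw [hproj]; simp
  -- integrability helper
  have hint : ∀ f : EuclideanSpace ℝ (Fin N) → ℝ, Continuous f → HasCompactSupport f →
      Integrable f (volume : Measure (EuclideanSpace ℝ (Fin N))) := fun f hc hs =>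
    hc.integrable_of_hasCompactSupport hs
  have icong : ∀ {f₁ f₂ : EuclideanSpace ℝ (Fin N) → ℝ}, (∀ x, f₁ x = f₂ x) →
      (∫ x, f₁ x) = ∫ x, f₂ x := fun h => by rw [funext h]
  -- the quantities
  set b : Fin N → ℝ := fun j => ∫ x, v j x * v j x with hb
  set Q : ℝ := ∫ x, G (u x) with hQ
  set a : Fin N → Fin N → ℝ :=
    fun i j => ∫ x, (x i * v i x) * fderiv ℝ (v j) x (e j) with ha
  set c : Fin N → Fin N → ℝ :=
    fun i j => ∫ x, (x i * fderiv ℝ (v i) x (e j)) * v j x with hc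
  -- basic integrabilities
  have int_vv : ∀ i j, Integrable (fun x => v i x * v j x)
      (volume : Measure (EuclideanSpace ℝ (Fin N))) := fun i j =>
    hint _ ((hvcont i).mul (hvcont j)) ((hvs j).mul_left)
  have int_xdv : ∀ i j, Integrable (fun x : EuclideanSpace ℝ (Fin N) =>
      (x i * fderiv ℝ (v i) x (e j)) * v j x) volume := fun i j =>
    hint _ (((hccont i).mul (hdcont i j)).mul (hvcont j))
      (((hds i j).mul_left).mul_right)
  have int_xvd : ∀ i j, Integrable (fun x : EuclideanSpace ℝ (Fin N) =>
      (x i * v i x) * fderiv ℝ (v j) x (e j)) volume := fun i j =>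
    hint _ (((hccont i).mul (hvcont i)).mul (hdcont j j))
      (((hvs i).mul_left).mul_right)
  have int_xvv : ∀ i j, Integrable (fun x : EuclideanSpace ℝ (Fin N) =>
      (x i * v i x) * v j x) volume := fun i j =>
    hint _ (((hccont i).mul (hvcont i)).mul (hvcont j))
      (((hvs i).mul_left).mul_right)
  have int_ite : ∀ i j, Integrable (fun x : EuclideanSpace ℝ (Fin N) =>
      if i = j then v i x * v j x else 0) volume := by
    intro i j
    by_cases hij : i = j <;> simp only [hij, if_true, if_false]
    · exact int_vv j j
    · exact integrable_zero _ _ _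
  -- Step 1 : ∫ xᵢ g(u) vᵢ = -Q
  have step1 : ∀ i, ∫ x, x i * (g (u x) * v i x) = - Q := by
    intro i
    have H := ibp (μ := (volume : Measure (EuclideanSpace ℝ (Fin N))))
      (f := fun x : EuclideanSpace ℝ (Fin N) => x i) (g := fun y => G (u y))
      (f' := fun _ => EuclideanSpace.proj (𝕜 := ℝ) i)
      (g' := fun x => g (u x) • fderiv ℝ u x) (v := e i)
      (hcder i) hw
      ((hint _ hwcont hws).const_mul _)
      (hint (fun x => x i * (g (u x) * v i x))
        ((hccont i).mul ((hg.comp hu.continuous).mul (hvcont i)))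
        (((hvs i).mul_left).mul_left))
      (hint _ ((hccont i).mul hwcont) (hws.mul_left))
    have hL : (∫ x, x i * (g (u x) * v i x))
        = ∫ x, (fun x : EuclideanSpace ℝ (Fin N) => x i) x
            * ((fun x => g (u x) • fderiv ℝ u x) x) (e i) := rfl
    rw [hL, H, hQ]
    congr 1
    exact icong fun x => by rw [hprojii]; ring
  -- Step 2 : a i j = -((if i = j then b j else 0) + c i j)
  have step2 : ∀ i j, a i j = -((if i = j then b j else 0) + c i j) := by
    intro i j
    have key : ∀ x : EuclideanSpace ℝ (Fin N),
        ((x i • fderiv ℝ (v i) x + v i x • EuclideanSpace.proj (𝕜 := ℝ) i) (e j)) * v j x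
          = (x i * fderiv ℝ (v i) x (e j)) * v j x + (if i = j then v i x * v j x else 0) := by
      intro x
      simp only [ContinuousLinearMap.add_apply, ContinuousLinearMap.smul_apply,
        smul_eq_mul, hproj]
      by_cases hij : i = j <;> simp [hij] <;> ring
    have H := ibp (μ := (volume : Measure (EuclideanSpace ℝ (Fin N))))
      (f := fun x : EuclideanSpace ℝ (Fin N) => x i * v i x) (g := v j)
      (f' := fun x => x i • fderiv ℝ (v i) x + v i x • EuclideanSpace.proj (𝕜 := ℝ) i)
      (g' := fun x => fderiv ℝ (v j) x) (v := e j)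
      (fun x => (hcder i x).mul ((hvd i x).hasFDerivAt))
      (fun x => ((hvd j) x).hasFDerivAt)
      (((int_xdv i j).add (int_ite i j)).congr (Filter.EventuallyEq.symm
        (Filter.Eventually.of_forall fun x => key x)))
      (int_xvd i j) (int_xvv i j)
    rw [ha]
    dsimp only
    rw [H, icong key, integral_add (int_xdv i j) (int_ite i j)]
    congr 1
    rw [add_comm]
    congr 1
    by_cases hij : i = j
    · subst hij; simp [hb]
    · simp [hij]
  -- Step 3 : c i j = -(b j) / 2
  have step3 : ∀ i j, c i j = -(b j) / 2 := by
    intro i j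
    have key : ∀ x : EuclideanSpace ℝ (Fin N),
        x i * ((v j x • fderiv ℝ (v j) x + v j x • fderiv ℝ (v j) x) (e i))
          = 2 * ((x i * fderiv ℝ (v i) x (e j)) * v j x) := by
      intro x
      simp only [ContinuousLinearMap.add_apply, ContinuousLinearMap.smul_apply, smul_eq_mul]
      rw [← hsym i j x]; ring
    have H := ibp (μ := (volume : Measure (EuclideanSpace ℝ (Fin N))))
      (f := fun x : EuclideanSpace ℝ (Fin N) => x i) (g := fun x => v j x * v j x)
      (f' := fun _ => EuclideanSpace.proj (𝕜 := ℝ) i)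
      (g' := fun x => v j x • fderiv ℝ (v j) x + v j x • fderiv ℝ (v j) x) (v := e i)
      (hcder i)
      (fun x => ((hvd j x).hasFDerivAt).mul ((hvd j x).hasFDerivAt))
      ((int_vv j j).const_mul _)
      (((int_xdv i j).const_mul 2).congr (Filter.EventuallyEq.symm
        (Filter.Eventually.of_forall fun x => key x)))
      (hint _ ((hccont i).mul ((hvcont j).mul (hvcont j))) (((hvs j).mul_left).mul_left))
    have hL : (∫ x : EuclideanSpace ℝ (Fin N),
        x i * ((v j x • fderiv ℝ (v j) x + v j x • fderiv ℝ (v j) x) (e i))) = -(b j) := by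
      rw [H, hb]
      congr 1
      exact icong fun x => by rw [hprojii]; ring
    rw [icong key, integral_const_mul] at hL
    have : (2:ℝ) * c i j = -(b j) := by rw [hc]; exact hL
    linarith
  -- Step 4 : ∑ j, a i j = Q
  have step4 : ∀ i, ∑ j, a i j = Q := by
    intro i
    have h1' : ∑ j, a i j = ∫ x, ∑ j, (x i * v i x) * fderiv ℝ (v j) x (e j) := by
      rw [ha]
      exact (integral_finset_sum Finset.univ fun j _ => int_xvd i j).symm
    rw [h1']
    have h2' : ∀ x : EuclideanSpace ℝ (Fin N),
        (∑ j, (x i * v i x) * fderiv ℝ (v j) x (e j)) = -(x i * (g (u x) * v i x)) := by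
      intro x
      rw [← Finset.mul_sum, hlap x]
      ring
    rw [icong h2', integral_neg, step1 i, neg_neg]
  -- assemble
  have hA : (∫ x, ‖fderiv ℝ u x‖ ^ 2) = ∑ j, b j := by
    have hpt : ∀ x, ‖fderiv ℝ u x‖ ^ 2 = ∑ j, v j x * v j x := by
      intro x
      rw [norm_sq_clm (fderiv ℝ u x)]
      exact Finset.sum_congr rfl fun j _ => by rw [sq]
    rw [icong hpt, integral_finset_sum Finset.univ fun j _ => int_vv j j]
  have T1 : ∑ i : Fin N, ∑ j, a i j = (N : ℝ) * Q := by
    simp [step4, Finset.sum_const, Finset.card_univ, nsmul_eq_mul]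
  have T2 : ∑ i : Fin N, ∑ j, a i j = -(∑ j, b j) + (N : ℝ) * (∑ j, b j) / 2 := by
    have haij : ∀ i j, a i j = (if i = j then -(b j) else 0) + b j / 2 := by
      intro i j
      rw [step2 i j, step3 i j]
      by_cases hij : i = j <;> simp [hij] <;> ring
    have h1'' : ∀ i : Fin N, (∑ j, ((if i = j then -(b j) else 0) + b j / 2))
        = -(b i) + (∑ j, b j) / 2 := by
      intro i
      rw [Finset.sum_add_distrib, Finset.sum_ite_eq, ← Finset.sum_div]
      simp
    rw [Finset.sum_congr rfl fun i _ =>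
      (Finset.sum_congr rfl fun j _ => haij i j).trans (h1'' i)]
    rw [Finset.sum_add_distrib]
    simp only [Finset.sum_neg_distrib, Finset.sum_const, Finset.card_univ, Fintype.card_fin,
      nsmul_eq_mul]
    ring
  rw [hA]
  have := T1.symm.trans T2
  linarith
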